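/- Let K ≥ 2 and δ > 0 with (K−1)δ < 2, and let A be the K×K symmetric matrix with entries A(i,j) = 1 − |i−j|·δ. Then A is invertible and its inverse is (1/(2δ)) times the tridiagonal-plus-corners matrix with diagonal entries (1−μ, 2, 2, …, 2, 1−μ), entries −1 on the first super- and sub-diagonals, entry −μ in positions (1,K) and (K,1), and zeros elsewhere, where μ = δ/((K−1)δ − 2). -/

import Mathlib

open Matrix

/-- equally-divided delay correlation matrix: `A(i,j) = 1 − |i−j|·δ`. -/
noncomputable def delayCorrMatrix (K : ℕ) (δ : ℝ) : Matrix (Fin K) (Fin K) ℝ :=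
  Matrix.of fun i j => 1 - |(i : ℝ) - (j : ℝ)| * δ

/-- The claimed inverse: `(1/(2δ))` times the tridiagonal-plus-corners matrix with
diagonal `(1−μ, 2, …, 2, 1−μ)`, `−1` on the first first super- and sub-diagonals, `−μ` in the
corners `(1,K)` and `(K,1)`, where `μ = δ/((K−1)δ − 2)` (overlapping contributions add,
which only matters for `K = 2`). -/
noncomputable def delayCorrInv (K : ℕ) (δ : ℝ) : Matrix (Fin K) (Fin K) ℝ :=
  let μ : ℝ := δ / ((K - 1 : ℝ) * δ - 2)
  Matrix.of fun i j =>
    (1 / (2 * δ)) *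
      ((if i = j then (2 : ℝ) else 0) +
        (if i = j ∧ ((i : ℕ) = 0 ∨ (i : ℕ) = K - 1) then -1 - μ else 0) +
        (if (i : ℕ) + 1 = (j : ℕ) ∨ (j : ℕ) + 1 = (i : ℕ) then -1 else 0) +
        (if ((i : ℕ) = 0 ∧ (j : ℕ) = K - 1) ∨ ((i : ℕ) = K - 1 ∧ (j : ℕ) = 0)
          then -μ else 0))

lemma sum_ind {K : ℕ} (a : Fin K → ℝ) (n : ℕ) (c : ℝ) :
    (∑ k : Fin K, (if n = (k : ℕ) then c else 0) * a k) =
      if h : n < K then c * a ⟨n, h⟩ else 0 := by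
  split_ifs with h
  · rw [Finset.sum_eq_single (⟨n, h⟩ : Fin K)]
    · simp
    · intro k _ hk
      rw [if_neg, zero_mul]
      exact fun he => hk (Fin.ext he.symm)
    · simp
  · apply Finset.sum_eq_zero
    intro k _
    rw [if_neg, zero_mul]
    intro he
    exact h (he ▸ k.isLt)

set_option maxHeartbeats 1200000 in
lemma delayCorrInv_mul (K : ℕ) (hK : 2 ≤ K) (δ : ℝ) (hδ : 0 < δ)
    (hKδ : (K - 1 : ℝ) * δ < 2) :
    delayCorrInv K δ * delayCorrMatrix K δ = 1 := by
  have hD : ((K : ℝ) - 1) * δ - 2 ≠ 0 := by linarith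
  set μ : ℝ := δ / (((K : ℝ) - 1) * δ - 2) with hμdef
  have hμe : μ * (((K : ℝ) - 1) * δ - 2) = δ := by
    rw [hμdef]; exact div_mul_cancel₀ _ hD
  have hK2 : (2 : ℝ) ≤ (K : ℝ) := by exact_mod_cast hK
  have hKc : ((K - 1 : ℕ) : ℝ) = (K : ℝ) - 1 := by
    rw [Nat.cast_sub (by omega)]; norm_num
  ext i j
  rw [Matrix.mul_apply, Matrix.one_apply]
  simp only [delayCorrInv, delayCorrMatrix, Matrix.of_apply]
  set a : Fin K → ℝ := fun k => 1 - |((k : ℕ) : ℝ) - ((j : ℕ) : ℝ)| * δ with ha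
  have hstep : ∀ k ∈ Finset.univ, (1 / (2 * δ)) *
      ((if i = k then (2 : ℝ) else 0) +
        (if i = k ∧ ((i : ℕ) = 0 ∨ (i : ℕ) = K - 1) then -1 - μ else 0) +
        (if (i : ℕ) + 1 = (k : ℕ) ∨ (k : ℕ) + 1 = (i : ℕ) then -1 else 0) +
        (if ((i : ℕ) = 0 ∧ (k : ℕ) = K - 1) ∨ ((i : ℕ) = K - 1 ∧ (k : ℕ) = 0)
          then -μ else 0)) * (1 - |((k : ℕ) : ℝ) - ((j : ℕ) : ℝ)| * δ) =
      (1 / (2 * δ)) *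
      (((if i = k then (2 : ℝ) else 0) +
        (if i = k ∧ ((i : ℕ) = 0 ∨ (i : ℕ) = K - 1) then -1 - μ else 0) +
        (if (i : ℕ) + 1 = (k : ℕ) ∨ (k : ℕ) + 1 = (i : ℕ) then -1 else 0) +
        (if ((i : ℕ) = 0 ∧ (k : ℕ) = K - 1) ∨ ((i : ℕ) = K - 1 ∧ (k : ℕ) = 0)
          then -μ else 0)) * a k) := by
    intro k _
    rw [ha]; ring
  rw [Finset.sum_congr rfl hstep, ← Finset.mul_sum]
  have hsum : (∑ k : Fin K,
      ((if i = k then (2 : ℝ) else 0) +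
        (if i = k ∧ ((i : ℕ) = 0 ∨ (i : ℕ) = K - 1) then -1 - μ else 0) +
        (if (i : ℕ) + 1 = (k : ℕ) ∨ (k : ℕ) + 1 = (i : ℕ) then -1 else 0) +
        (if ((i : ℕ) = 0 ∧ (k : ℕ) = K - 1) ∨ ((i : ℕ) = K - 1 ∧ (k : ℕ) = 0)
          then -μ else 0)) * a k) = if i = j then 2 * δ else 0 := by
    have hjK : (j : ℕ) ≤ K - 1 := by have := j.isLt; omega
    have hxnn : (0 : ℝ) ≤ ((j : ℕ) : ℝ) := Nat.cast_nonneg _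
    have hxle : ((j : ℕ) : ℝ) ≤ (K : ℝ) - 1 := by
      rw [← hKc]; exact_mod_cast hjK
    rcases eq_or_ne (i : ℕ) 0 with hi0 | hi0
    · -- first row
      have hpt : ∀ k ∈ Finset.univ, ((if i = k then (2 : ℝ) else 0) +
          (if i = k ∧ ((i : ℕ) = 0 ∨ (i : ℕ) = K - 1) then -1 - μ else 0) +
          (if (i : ℕ) + 1 = (k : ℕ) ∨ (k : ℕ) + 1 = (i : ℕ) then -1 else 0) +
          (if ((i : ℕ) = 0 ∧ (k : ℕ) = K - 1) ∨ ((i : ℕ) = K - 1 ∧ (k : ℕ) = 0)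
            then -μ else 0)) * a k =
          (if 0 = (k : ℕ) then (1 : ℝ) - μ else 0) * a k +
          (if 1 = (k : ℕ) then (-1 : ℝ) else 0) * a k +
          (if K - 1 = (k : ℕ) then -μ else 0) * a k := by
        intro k _
        have hklt := k.isLt
        simp only [Fin.ext_iff]
        split_ifs <;> first | ring1 | (exfalso; omega)
      rw [Finset.sum_congr rfl hpt, Finset.sum_add_distrib, Finset.sum_add_distrib,
        sum_ind, sum_ind, sum_ind, dif_pos (show 0 < K by omega),
        dif_pos (show 1 < K by omega), dif_pos (show K - 1 < K by omega)]
      have e0 : a ⟨0, by omega⟩ = 1 - ((j : ℕ) : ℝ) * δ := by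
        simp only [ha]
        rw [show |((0 : ℕ) : ℝ) - ((j : ℕ) : ℝ)| = ((j : ℕ) : ℝ) by
          rw [Nat.cast_zero, zero_sub, abs_neg, abs_of_nonneg hxnn]]
      have eK : a ⟨K - 1, by omega⟩ = 1 - ((K : ℝ) - 1 - ((j : ℕ) : ℝ)) * δ := by
        simp only [ha]
        rw [show |((K - 1 : ℕ) : ℝ) - ((j : ℕ) : ℝ)| = (K : ℝ) - 1 - ((j : ℕ) : ℝ) by
          rw [hKc, abs_of_nonneg (by linarith)]]
      by_cases hij : i = j
      · rw [if_pos hij]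
        have hj0 : (j : ℕ) = 0 := by rw [← hij]; exact hi0
        have e1 : a ⟨1, by omega⟩ = 1 - δ := by
          simp only [ha, hj0]
          norm_num
        rw [e0, e1, eK, hj0]
        push_cast
        linear_combination hμe
      · rw [if_neg hij]
        have hj1 : 1 ≤ (j : ℕ) := by
          rcases Nat.eq_zero_or_pos (j : ℕ) with h | h
          · exact absurd (Fin.ext (by omega)) hij
          · omega
        have hx1 : (1 : ℝ) ≤ ((j : ℕ) : ℝ) := by exact_mod_cast hj1
        have e1 : a ⟨1, by omega⟩ = 1 - (((j : ℕ) : ℝ) - 1) * δ := by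
          simp only [ha]
          rw [show |((1 : ℕ) : ℝ) - ((j : ℕ) : ℝ)| = ((j : ℕ) : ℝ) - 1 by
            rw [Nat.cast_one, abs_of_nonpos (by linarith)]; ring]
        rw [e0, e1, eK]
        linear_combination hμe
    · rcases eq_or_ne (i : ℕ) (K - 1) with hiK | hiK
      · -- last row
        have hi1 : 1 ≤ (i : ℕ) := by omega
        have hpt : ∀ k ∈ Finset.univ, ((if i = k then (2 : ℝ) else 0) +
            (if i = k ∧ ((i : ℕ) = 0 ∨ (i : ℕ) = K - 1) then -1 - μ else 0) +
            (if (i : ℕ) + 1 = (k : ℕ) ∨ (k : ℕ) + 1 = (i : ℕ) then -1 else 0) +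
            (if ((i : ℕ) = 0 ∧ (k : ℕ) = K - 1) ∨ ((i : ℕ) = K - 1 ∧ (k : ℕ) = 0)
              then -μ else 0)) * a k =
            (if K - 1 = (k : ℕ) then (1 : ℝ) - μ else 0) * a k +
            (if K - 2 = (k : ℕ) then (-1 : ℝ) else 0) * a k +
            (if 0 = (k : ℕ) then -μ else 0) * a k := by
          intro k _
          have hklt := k.isLt
          simp only [Fin.ext_iff]
          split_ifs <;> first | ring1 | (exfalso; omega)
        rw [Finset.sum_congr rfl hpt, Finset.sum_add_distrib, Finset.sum_add_distrib,
          sum_ind, sum_ind, sum_ind, dif_pos (show K - 1 < K by omega),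
          dif_pos (show K - 2 < K by omega), dif_pos (show 0 < K by omega)]
        have e0 : a ⟨0, by omega⟩ = 1 - ((j : ℕ) : ℝ) * δ := by
          simp only [ha]
          rw [show |((0 : ℕ) : ℝ) - ((j : ℕ) : ℝ)| = ((j : ℕ) : ℝ) by
            rw [Nat.cast_zero, zero_sub, abs_neg, abs_of_nonneg hxnn]]
        have eK : a ⟨K - 1, by omega⟩ = 1 - ((K : ℝ) - 1 - ((j : ℕ) : ℝ)) * δ := by
          simp only [ha]
          rw [show |((K - 1 : ℕ) : ℝ) - ((j : ℕ) : ℝ)| = (K : ℝ) - 1 - ((j : ℕ) : ℝ) by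
            rw [hKc, abs_of_nonneg (by linarith)]]
        have hK2c : ((K - 2 : ℕ) : ℝ) = (K : ℝ) - 2 := by
          rw [Nat.cast_sub (by omega)]; norm_num
        by_cases hij : i = j
        · rw [if_pos hij]
          have hjK : (j : ℕ) = K - 1 := by rw [← hij]; exact hiK
          have hxK : ((j : ℕ) : ℝ) = (K : ℝ) - 1 := by rw [hjK, hKc]
          have e2 : a ⟨K - 2, by omega⟩ = 1 - δ := by
            simp only [ha]
            rw [show |((K - 2 : ℕ) : ℝ) - ((j : ℕ) : ℝ)| = 1 by
              rw [hK2c, hxK, abs_of_nonpos (by linarith)]; ring]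
            ring
          rw [e0, e2, eK, hxK]
          linear_combination hμe
        · rw [if_neg hij]
          have hjle : (j : ℕ) ≤ K - 2 := by
            have : (j : ℕ) ≠ K - 1 := fun h => hij (Fin.ext (by omega))
            omega
          have hxle2 : ((j : ℕ) : ℝ) ≤ (K : ℝ) - 2 := by
            rw [← hK2c]; exact_mod_cast hjle
          have e2 : a ⟨K - 2, by omega⟩ = 1 - ((K : ℝ) - 2 - ((j : ℕ) : ℝ)) * δ := by
            simp only [ha]
            rw [show |((K - 2 : ℕ) : ℝ) - ((j : ℕ) : ℝ)| = (K : ℝ) - 2 - ((j : ℕ) : ℝ) by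
              rw [hK2c, abs_of_nonneg (by linarith)]]
          rw [e0, e2, eK]
          linear_combination hμe
      · -- interior row
        have hi1 : 1 ≤ (i : ℕ) := by omega
        have hiK' : (i : ℕ) + 1 < K := by have := i.isLt; omega
        have hpt : ∀ k ∈ Finset.univ, ((if i = k then (2 : ℝ) else 0) +
            (if i = k ∧ ((i : ℕ) = 0 ∨ (i : ℕ) = K - 1) then -1 - μ else 0) +
            (if (i : ℕ) + 1 = (k : ℕ) ∨ (k : ℕ) + 1 = (i : ℕ) then -1 else 0) +
            (if ((i : ℕ) = 0 ∧ (k : ℕ) = K - 1) ∨ ((i : ℕ) = K - 1 ∧ (k : ℕ) = 0)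
              then -μ else 0)) * a k =
            (if (i : ℕ) = (k : ℕ) then (2 : ℝ) else 0) * a k +
            (if (i : ℕ) + 1 = (k : ℕ) then (-1 : ℝ) else 0) * a k +
            (if (i : ℕ) - 1 = (k : ℕ) then (-1 : ℝ) else 0) * a k := by
          intro k _
          have hklt := k.isLt
          simp only [Fin.ext_iff]
          split_ifs <;> first | ring1 | (exfalso; omega)
        rw [Finset.sum_congr rfl hpt, Finset.sum_add_distrib, Finset.sum_add_distrib,
          sum_ind, sum_ind, sum_ind, dif_pos (show (i : ℕ) < K from i.isLt),
          dif_pos hiK', dif_pos (show (i : ℕ) - 1 < K by omega)]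
        have hic : ((i : ℕ) - 1 : ℕ) = (i : ℕ) - 1 := rfl
        have him : (((i : ℕ) - 1 : ℕ) : ℝ) = ((i : ℕ) : ℝ) - 1 := by
          rw [Nat.cast_sub hi1]; norm_num
        have hip : (((i : ℕ) + 1 : ℕ) : ℝ) = ((i : ℕ) : ℝ) + 1 := by push_cast; ring
        set x : ℝ := ((j : ℕ) : ℝ) with hx
        set y : ℝ := ((i : ℕ) : ℝ) with hy
        have ei : a ⟨(i : ℕ), i.isLt⟩ = 1 - |y - x| * δ := by simp only [ha]; rfl
        have eip : a ⟨(i : ℕ) + 1, hiK'⟩ = 1 - |y + 1 - x| * δ := by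
          simp only [ha]; rw [hip]
        have eim : a ⟨(i : ℕ) - 1, by omega⟩ = 1 - |y - 1 - x| * δ := by
          simp only [ha]; rw [him]
        rw [ei, eip, eim]
        by_cases hij : i = j
        · rw [if_pos hij]
          have hyx : y = x := by rw [hx, hy, hij]
          rw [hyx]
          rw [show |x - x| = 0 by simp, show |x + 1 - x| = 1 by norm_num,
            show |x - 1 - x| = 1 by rw [abs_of_nonpos (by linarith)]; ring]
          ring
        · rw [if_neg hij]
          rcases Nat.lt_or_ge (j : ℕ) (i : ℕ) with h | h
          · have hxy : x + 1 ≤ y := by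
              rw [hx, hy]; exact_mod_cast h
            rw [show |y - x| = y - x from abs_of_nonneg (by linarith),
              show |y + 1 - x| = y + 1 - x from abs_of_nonneg (by linarith),
              show |y - 1 - x| = y - 1 - x from abs_of_nonneg (by linarith)]
            ring
          · have h' : (i : ℕ) < (j : ℕ) := by
              rcases Nat.lt_or_ge (i : ℕ) (j : ℕ) with h2 | h2
              · exact h2
              · exact absurd (Fin.ext (by omega)) hij
            have hxy : y + 1 ≤ x := by
              rw [hx, hy]; exact_mod_cast h'
            rw [show |y - x| = -(y - x) from abs_of_nonpos (by linarith),
              show |y + 1 - x| = -(y + 1 - x) from abs_of_nonpos (by linarith),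
              show |y - 1 - x| = -(y - 1 - x) from abs_of_nonpos (by linarith)]
            ring
  rw [hsum]
  by_cases hij : i = j
  · rw [if_pos hij, if_pos hij]
    field_simp
  · rw [if_neg hij, if_neg hij, mul_zero]


/-- For `K ≥ 2`, `δ > 0`, `(K−1)δ < 2`, the matrix `A(i,j) = 1 − |i−j|δ` is invertible
with the explicit tridiagonal-plus-corners inverse. -/
theorem delayCorrMatrix_inv (K : ℕ) (hK : 2 ≤ K) (δ : ℝ) (hδ : 0 < δ)
    (hKδ : (K - 1 : ℝ) * δ < 2) :
    IsUnit (delayCorrMatrix K δ).det ∧ (delayCorrMatrix K δ)⁻¹ = delayCorrInv K δ := by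
  have hBA := delayCorrInv_mul K hK δ hδ hKδ
  have hAB : delayCorrMatrix K δ * delayCorrInv K δ = 1 := mul_eq_one_comm.mp hBA
  exact ⟨Matrix.isUnit_det_of_right_inverse hAB, Matrix.inv_eq_right_inv hAB⟩
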